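/- Let A₁,…,A_{n+2} : ℝ → ℝ^{n+1} be C¹ maps with ‖Aᵢ(t)‖ = 1 for all t (a motion on the unit sphere Sⁿ), let t₀ ∈ ℝ be such that A₁(t₀),…,A_{n+2}(t₀) are in general position (every n+1 of them linearly independent in ℝ^{n+1}), and let α₁,…,α_{n+2} be nonzero reals with Σᵢ αᵢAᵢ(t₀) = 0. Then Σ_{1≤i<j≤n+2} αᵢα_j · d/dt[‖Aᵢ(t) − A_j(t)‖²] evaluated at t = t₀ equals 0. (This is the k = 1 case, proved in the paper within Lemma 4.6, of the spherical volume-balance identity; since on the unit sphere ‖P−Q‖² = 2 − 2cos d(P,Q) with d the geodesic distance, it is equivalent to Σ_{i<j} αᵢα_j sin(d(Aᵢ(t₀),A_j(t₀))) · d/dt[d(Aᵢ(t),A_j(t))]|_{t₀} = 0.) -/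

import Mathlib

open scoped RealInnerProductSpace


/-- Points on the unit sphere of `ℝ^{d}` are in spherical general position if every `d` of
them are linearly independent. -/
def SphGeneralPosition {d m : ℕ} (A : Fin m → EuclideanSpace ℝ (Fin d)) : Prop :=
  ∀ s : Finset (Fin m), s.card = d → LinearIndependent ℝ (fun i : ↥s => A i.1)

/-- For a `C¹` motion of a degenerate spherical `(n+1)`-simplex on the unit sphere `Sⁿ`, the
`α`-weighted sum of the derivatives of the squared chordal distances vanishes (the `k = 1`
case of the spherical volume-balance identity). -/
theorem spherical_weighted_sum_deriv_eq_zero {n : ℕ}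
    (A : Fin (n + 2) → ℝ → EuclideanSpace ℝ (Fin (n + 1)))
    (hA : ∀ i, ContDiff ℝ 1 (A i))
    (hAsph : ∀ i t, ‖A i t‖ = 1)
    (t₀ : ℝ)
    (hgp : SphGeneralPosition (fun i => A i t₀))
    (α : Fin (n + 2) → ℝ) (hα : ∀ i, α i ≠ 0)
    (hsum : ∑ i, α i • A i t₀ = 0) :
    ∑ i : Fin (n + 2), ∑ j : Fin (n + 2),
      (if i < j then α i * α j * deriv (fun t : ℝ => ‖A i t - A j t‖ ^ 2) t₀ else 0) = 0 := by
  set a : Fin (n + 2) → EuclideanSpace ℝ (Fin (n + 1)) := fun i => A i t₀ with ha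
  set v : Fin (n + 2) → EuclideanSpace ℝ (Fin (n + 1)) := fun i => deriv (A i) t₀ with hv
  have hd : ∀ i, HasDerivAt (A i) (v i) t₀ := fun i =>
    (((hA i).differentiable one_ne_zero) t₀).hasDerivAt
  -- tangency : ⟪v i, a i⟫ = 0
  have htan : ∀ i, ⟪a i, v i⟫ = 0 := by
    intro i
    have h1 : HasDerivAt (fun t => ⟪A i t, A i t⟫) (⟪a i, v i⟫ + ⟪v i, a i⟫) t₀ :=
      (hd i).inner ℝ (hd i)
    have h2 : (fun t => ⟪A i t, A i t⟫) = fun _ : ℝ => (1 : ℝ) := by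
      funext t
      rw [real_inner_self_eq_norm_sq, hAsph i t]; norm_num
    rw [h2] at h1
    have h3 := (hasDerivAt_const t₀ (1 : ℝ)).unique h1
    have h4 : ⟪a i, v i⟫ = ⟪v i, a i⟫ := real_inner_comm _ _
    linarith [h3, h4]
  -- compute each derivative
  have hder : ∀ i j, deriv (fun t : ℝ => ‖A i t - A j t‖ ^ 2) t₀
      = ⟪a i - a j, v i - v j⟫ + ⟪v i - v j, a i - a j⟫ := by
    intro i j
    have h1 : HasDerivAt (fun t => ⟪A i t - A j t, A i t - A j t⟫)
        (⟪a i - a j, v i - v j⟫ + ⟪v i - v j, a i - a j⟫) t₀ :=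
      ((hd i).sub (hd j)).inner ℝ ((hd i).sub (hd j))
    have h2 : (fun t : ℝ => ‖A i t - A j t‖ ^ 2)
        = fun t => ⟪A i t - A j t, A i t - A j t⟫ := by
      funext t; rw [real_inner_self_eq_norm_sq]
    rw [h2]
    exact h1.deriv
  set e : Fin (n + 2) → Fin (n + 2) → ℝ := fun i j =>
    α i * α j * deriv (fun t : ℝ => ‖A i t - A j t‖ ^ 2) t₀ with he
  have hsimp : ∀ i j, e i j = -2 * (α i * α j * ⟪v i, a j⟫ + α i * α j * ⟪a i, v j⟫) := by
    intro i j
    have h1 : ⟪a j, v j⟫ = 0 := htan j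
    have h2 : ⟪a i, v i⟫ = 0 := htan i
    have h3 : ⟪v i, a i⟫ = 0 := by rw [real_inner_comm]; exact h2
    have h4 : ⟪v j, a j⟫ = 0 := by rw [real_inner_comm]; exact h1
    have h5 : ⟪v j, a i⟫ = ⟪a i, v j⟫ := real_inner_comm _ _
    have h6 : ⟪a j, v i⟫ = ⟪v i, a j⟫ := real_inner_comm _ _
    simp only [he, hder i j, inner_sub_left, inner_sub_right]
    rw [h1, h2, h3, h4, h5, h6]
    ring
  -- the full double sum is zero
  have hcross1 : ∑ i, ∑ j, α i * α j * ⟪v i, a j⟫ = 0 := by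
    have : ∀ i : Fin (n + 2), ∑ j, α i * α j * ⟪v i, a j⟫ = α i * ⟪v i, ∑ j, α j • a j⟫ := by
      intro i
      rw [inner_sum, Finset.mul_sum]
      congr 1; funext j
      rw [real_inner_smul_right]; ring
    simp only [this, show ∑ j, α j • a j = 0 from hsum, inner_zero_right, mul_zero, Finset.sum_const_zero]
  have hcross2 : ∑ i, ∑ j, α i * α j * ⟪a i, v j⟫ = 0 := by
    rw [Finset.sum_comm]
    have : ∀ j : Fin (n + 2), ∑ i, α i * α j * ⟪a i, v j⟫ = α j * ⟪∑ i, α i • a i, v j⟫ := by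
      intro j
      rw [sum_inner, Finset.mul_sum]
      congr 1; funext i
      rw [real_inner_smul_left]; ring
    simp only [this, show ∑ i, α i • a i = 0 from hsum, inner_zero_left, mul_zero, Finset.sum_const_zero]
  have hfull : ∑ i, ∑ j, e i j = 0 := by
    simp only [hsimp]
    have : ∑ i, ∑ j, (-2 * (α i * α j * ⟪v i, a j⟫ + α i * α j * ⟪a i, v j⟫))
        = -2 * ((∑ i, ∑ j, α i * α j * ⟪v i, a j⟫) + ∑ i, ∑ j, α i * α j * ⟪a i, v j⟫) := by
      rw [← Finset.sum_add_distrib]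
      rw [Finset.mul_sum]
      congr 1; funext i
      rw [← Finset.sum_add_distrib, Finset.mul_sum]
    rw [this, hcross1, hcross2]; ring
  have hsymm : ∀ i j, e i j = e j i := by
    intro i j
    have h : (fun t : ℝ => ‖A i t - A j t‖ ^ 2) = fun t : ℝ => ‖A j t - A i t‖ ^ 2 := by
      funext t; rw [norm_sub_rev]
    simp only [he]
    rw [h]; ring
  have hdiag : ∀ i, e i i = 0 := by
    intro i
    rw [hsimp i i, htan i, real_inner_comm, htan i]; ring
  -- split into trichotomy
  have hsplit : ∀ i j : Fin (n + 2), e i j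
      = (if i < j then e i j else 0) + (if i = j then e i j else 0)
        + (if j < i then e i j else 0) := by
    intro i j
    rcases lt_trichotomy i j with h | h | h
    · simp [h, ne_of_lt h, asymm h]
    · simp [h, lt_irrefl]
    · simp [h, asymm h, (ne_of_lt h).symm]
  have hlt_eq : ∑ i, ∑ j, (if i < j then e i j else 0)
      = ∑ i, ∑ j, (if j < i then e i j else 0) := by
    rw [Finset.sum_comm]
    congr 1; funext i
    congr 1; funext j
    by_cases h : j < i
    · simp [h, hsymm i j]
    · simp [h]
  have hdiag_sum : ∑ i, ∑ j, (if i = j then e i j else 0) = 0 := by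
    have : ∀ i : Fin (n + 2), ∑ j, (if i = j then e i j else 0) = e i i := by
      intro i
      rw [Finset.sum_ite_eq]
      simp
    simp only [this, hdiag, Finset.sum_const_zero]
  have hdecomp : ∑ i, ∑ j, e i j
      = (∑ i, ∑ j, (if i < j then e i j else 0)) + (∑ i, ∑ j, (if i = j then e i j else 0))
        + ∑ i, ∑ j, (if j < i then e i j else 0) := by
    rw [← Finset.sum_add_distrib, ← Finset.sum_add_distrib]
    congr 1; funext i
    rw [← Finset.sum_add_distrib, ← Finset.sum_add_distrib]
    congr 1; funext j
    exact hsplit i j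
  rw [hdecomp, hdiag_sum, ← hlt_eq] at hfull
  linarith [hfull]
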